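/- For m = 1, the state Φ̃^{(1)} ∘ j^{(1)} on 𝒜₁ * 𝒜₂ is the Boolean product of φ₁ and φ₂: for any non-empty words w₁, …, wₙ in 𝒜_{k₁}, …, 𝒜_{kₙ} with k₁ ≠ k₂ ≠ … ≠ kₙ (k_i ∈ {1,2}), one has Φ̃^{(1)}(j_{k₁}^{(1)}(w₁) ⋯ j_{kₙ}^{(1)}(wₙ)) = φ_{k₁}(w₁) ⋯ φ_{kₙ}(wₙ), and Φ̃^{(1)}(j^{(1)}(1)) = 1. -/

import Mathlib

open scoped ComplexOrder TensorProduct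

/-- `w` is a non-empty word in the generating set `G`. -/
def IsWord {R : Type*} [Monoid R] (G : Set R) (w : R) : Prop :=
  ∃ l : List R, l ≠ [] ∧ (∀ x ∈ l, x ∈ G) ∧ w = l.prod

/-- `φ` is a state on the unital complex *-algebra `R`. -/
def IsState {R : Type*} [Ring R] [Algebra ℂ R] [StarRing R] (φ : R →ₗ[ℂ] ℂ) : Prop :=
  φ 1 = 1 ∧ ∀ x, 0 ≤ φ (x * star x)

/-- The ordered product `f a * f (a+1) * ⋯ * f b` (an empty product if `b < a`). -/
def ordProd {T : Type*} [Monoid T] (f : ℕ → T) (a b : ℕ) : T :=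
  ((List.range' a (b + 1 - a)).map f).prod

/-- The element `t_{[k,m]}`: `g` at the tensor sites `k, …, m` (1-based), with the
convention `t_{[0,m]} = 0`. -/
def tBlock {T : Type*} [Ring T] (g : ℕ → T) (k m : ℕ) : T :=
  if k = 0 then 0 else ordProd g k m

/-- The embedding at tensor site `k` among the sites `1, …, m`, with value `0` out of
range (the convention `i_{m+1,m}(a) = 0`). -/
def embSite {T R : Type*} [Ring T] (e : ℕ → R → T) (m k : ℕ) (x : R) : T :=
  if 1 ≤ k ∧ k ≤ m then e k x else 0

/-- `φt` is the Boolean extension of the state `φ` to the free product `S = R * ℂ[t]`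
(with canonical embedding `ι : R → S` and separator `t`):  one has `φt 1 = 1` and
`φt (t^{e₀} w₁ t^{e₁} ⋯ wₙ t^{eₙ}) = φ(w₁) ⋯ φ(wₙ)` for all non-empty words `wᵢ` in the
generating set `G` and all exponents with `e₁, …, e_{n-1} > 0`. -/
def IsBooleanExt {R S : Type*} [Ring R] [Algebra ℂ R] [Ring S] [Algebra ℂ S]
    (G : Set R) (ι : R → S) (t : S) (φ : R →ₗ[ℂ] ℂ) (φt : S →ₗ[ℂ] ℂ) : Prop :=
  φt 1 = 1 ∧
  ∀ (n : ℕ) (w : ℕ → R) (e : ℕ → ℕ),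
    (∀ i < n, IsWord G (w i)) →
    (∀ i, 0 < i → i < n → 0 < e i) →
    φt (((List.range n).map fun i => t ^ e i * ι (w i)).prod * t ^ e n) =
      ((List.range n).map fun i => φ (w i)).prod

private lemma prodRangeSucc {M : Type*} [Monoid M] (f : ℕ → M) (n : ℕ) :
    ((List.range (n+1)).map f).prod = ((List.range n).map f).prod * f n := by
  simp [List.range_succ]

private lemma reshape_even {M : Type*} [Monoid M] (u s : ℕ → M) (n : ℕ) :
    ((List.range n).map (fun i => if Even i then u i else s i)).prod
      = ((List.range ((n+1)/2)).map
          (fun q => (if q = 0 then 1 else s (2*q-1)) * u (2*q))).prod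
        * (if n % 2 = 0 ∧ n ≠ 0 then s (n-1) else 1) := by
  set f : ℕ → M := fun i => if Even i then u i else s i with hf
  set g : ℕ → M := fun q => (if q = 0 then 1 else s (2*q-1)) * u (2*q) with hg
  set C : ℕ → Prop := fun n =>
    ((List.range n).map f).prod
      = ((List.range ((n+1)/2)).map g).prod * (if n % 2 = 0 ∧ n ≠ 0 then s (n-1) else 1)
    with hC
  have step1 : ∀ m, C (2*m) → C (2*m+1) := by
    intro m h
    simp only [hC] at h ⊢
    rw [prodRangeSucc, h]
    have e1 : (2*m+1+1)/2 = m+1 := by omega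
    have e2 : (2*m+1)/2 = m := by omega
    rw [e1, e2, prodRangeSucc, if_neg (by omega : ¬((2*m+1) % 2 = 0 ∧ 2*m+1 ≠ 0)),
      mul_one]
    have hfe : f (2*m) = u (2*m) := by
      simp only [hf]; rw [if_pos ⟨m, by ring⟩]
    rw [hfe, mul_assoc]
    congr 1
    simp only [hg]
    by_cases hm : m = 0
    · subst hm; simp
    · rw [if_pos (by omega : (2*m) % 2 = 0 ∧ 2*m ≠ 0), if_neg hm]
  have step2 : ∀ m, C (2*m+1) → C (2*m+2) := by
    intro m h
    simp only [hC] at h ⊢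
    rw [show 2*m+2 = (2*m+1)+1 from rfl, prodRangeSucc, h]
    have e1 : (2*m+1+1)/2 = m+1 := by omega
    have e2 : (2*m+1+1+1)/2 = m+1 := by omega
    rw [e1, e2, if_neg (by omega : ¬((2*m+1) % 2 = 0 ∧ 2*m+1 ≠ 0)), mul_one,
      if_pos (by omega : (2*m+1+1) % 2 = 0 ∧ 2*m+1+1 ≠ 0)]
    have hfo : f (2*m+1) = s (2*m+1) := by
      simp only [hf]; rw [if_neg (by simp [Nat.even_iff])]
    rw [hfo]
    norm_num
  have key : ∀ m, C (2*m) ∧ C (2*m+1) := by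
    intro m
    induction m with
    | zero =>
      constructor
      · simp only [hC]; simp
      · refine step1 0 ?_
        simp only [hC]; simp
    | succ m ih =>
      have h2 : C (2*(m+1)) := by
        have := step2 m ih.2
        have e : 2*(m+1) = 2*m+2 := by ring
        rwa [e]
      exact ⟨h2, step1 (m+1) h2⟩
  rcases Nat.even_or_odd n with ⟨m, hm⟩ | ⟨m, hm⟩
  · have := (key m).1; rwa [show 2*m = n by omega] at this
  · have := (key m).2; rwa [show 2*m+1 = n by omega] at this

private lemma reshape_odd {M : Type*} [Monoid M] (u s : ℕ → M) (n : ℕ) :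
    ((List.range n).map (fun i => if Even i then s i else u i)).prod
      = ((List.range (n/2)).map (fun q => s (2*q) * u (2*q+1))).prod
        * (if n % 2 = 1 then s (n-1) else 1) := by
  set f : ℕ → M := fun i => if Even i then s i else u i with hf
  set g : ℕ → M := fun q => s (2*q) * u (2*q+1) with hg
  set C : ℕ → Prop := fun n =>
    ((List.range n).map f).prod
      = ((List.range (n/2)).map g).prod * (if n % 2 = 1 then s (n-1) else 1)
    with hC
  have step1 : ∀ m, C (2*m) → C (2*m+1) := by
    intro m h
    simp only [hC] at h ⊢
    rw [prodRangeSucc, h]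
    have e1 : (2*m+1)/2 = m := by omega
    have e2 : (2*m)/2 = m := by omega
    rw [e1, e2, if_neg (by omega : ¬(2*m) % 2 = 1), mul_one,
      if_pos (by omega : (2*m+1) % 2 = 1)]
    have hfe : f (2*m) = s (2*m) := by
      simp only [hf]; rw [if_pos ⟨m, by ring⟩]
    rw [hfe]
    norm_num
  have step2 : ∀ m, C (2*m+1) → C (2*m+2) := by
    intro m h
    simp only [hC] at h ⊢
    rw [show 2*m+2 = (2*m+1)+1 from rfl, prodRangeSucc, h]
    have e1 : (2*m+1)/2 = m := by omega
    have e2 : (2*m+1+1)/2 = m+1 := by omega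
    rw [e1, e2, if_pos (by omega : (2*m+1) % 2 = 1),
      if_neg (by omega : ¬(2*m+1+1) % 2 = 1), mul_one, prodRangeSucc]
    have hfo : f (2*m+1) = u (2*m+1) := by
      simp only [hf]; rw [if_neg (by simp [Nat.even_iff])]
    rw [hfo, mul_assoc]
    congr 1
  have key : ∀ m, C (2*m) ∧ C (2*m+1) := by
    intro m
    induction m with
    | zero =>
      constructor
      · simp only [hC]; simp
      · refine step1 0 ?_
        simp only [hC]; simp
    | succ m ih =>
      have h2 : C (2*(m+1)) := by
        have := step2 m ih.2
        have e : 2*(m+1) = 2*m+2 := by ring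
        rwa [e]
      exact ⟨h2, step1 (m+1) h2⟩
  rcases Nat.even_or_odd n with ⟨m, hm⟩ | ⟨m, hm⟩
  · have := (key m).1; rwa [show 2*m = n by omega] at this
  · have := (key m).2; rwa [show 2*m+1 = n by omega] at this

private lemma eval_words {R S : Type*} [Ring R] [Algebra ℂ R] [Ring S] [Algebra ℂ S]
    (G : Set R) (ι : R → S) (t : S) (φ : R →ₗ[ℂ] ℂ) (φt : S →ₗ[ℂ] ℂ)
    (hext : IsBooleanExt G ι t φ φt) (n : ℕ) (b : ℕ → Prop) [DecidablePred b]
    (halt : ∀ i, i + 1 < n → (b (i+1) ↔ ¬ b i))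
    (v : ℕ → R) (r : ℕ → ℕ)
    (hv : ∀ i < n, b i → IsWord G (v i))
    (hr : ∀ i < n, 0 < r i) :
    φt (((List.range n).map (fun i => if b i then ι (v i) else t ^ r i)).prod)
      = ((List.range n).map (fun i => if b i then φ (v i) else 1)).prod := by
  have hb : ∀ i < n, (b i ↔ (Even i ↔ b 0)) := by
    intro i
    induction i with
    | zero => intro _; simp
    | succ i ih =>
      intro h
      rw [halt i h, ih (by omega), Nat.even_add_one]
      tauto
  by_cases hb0 : b 0
  · -- words at even positions
    have hbe : ∀ i < n, (b i ↔ Even i) := by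
      intro i hi; rw [hb i hi]; tauto
    have hmap1 : (List.range n).map (fun i => if b i then ι (v i) else t ^ r i)
        = (List.range n).map (fun i => if Even i then ι (v i) else t ^ r i) := by
      apply List.map_congr_left
      intro i hi
      rw [List.mem_range] at hi
      exact if_congr (hbe i hi) rfl rfl
    have hmap2 : (List.range n).map (fun i => if b i then φ (v i) else 1)
        = (List.range n).map (fun i => if Even i then φ (v i) else 1) := by
      apply List.map_congr_left
      intro i hi
      rw [List.mem_range] at hi
      exact if_congr (hbe i hi) rfl rfl
    rw [hmap1, hmap2]
    set N := (n+1)/2 with hN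
    set E : ℕ → ℕ := fun q => if q = 0 then 0 else if 2*q-1 < n then r (2*q-1) else 0
      with hE
    have harg : ((List.range n).map (fun i => if Even i then ι (v i) else t ^ r i)).prod
        = ((List.range N).map (fun q => t ^ E q * ι (v (2*q)))).prod * t ^ E N := by
      rw [reshape_even (fun i => ι (v i)) (fun i => t ^ r i) n]
      congr 1
      · apply congrArg
        apply List.map_congr_left
        intro q hq
        rw [List.mem_range] at hq
        by_cases h0 : q = 0
        · subst h0; simp [hE]
        · have h1 : 2*q-1 < n := by omega
          rw [if_neg h0]
          simp only [hE]
          rw [if_neg h0, if_pos h1]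
      · simp only [hE, hN]
        by_cases h0 : (n+1)/2 = 0
        · rw [if_pos h0, if_neg (by omega), pow_zero]
        · rw [if_neg h0]
          by_cases h1 : n % 2 = 0
          · rw [if_pos (by omega : 2*((n+1)/2)-1 < n), if_pos (by omega : n % 2 = 0 ∧ n ≠ 0),
              show 2*((n+1)/2)-1 = n-1 by omega]
          · rw [if_neg (by omega : ¬ 2*((n+1)/2)-1 < n), if_neg (by omega), pow_zero]
    rw [harg, hext.2 N (fun q => v (2*q)) E
        (fun q hq => hv (2*q) (by omega) (by rw [hbe (2*q) (by omega)]; exact ⟨q, by ring⟩))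
        (fun q hq1 hq2 => by
          simp only [hE]
          rw [if_neg (by omega), if_pos (by omega : 2*q-1 < n)]
          exact hr (2*q-1) (by omega))]
    rw [reshape_even (fun i => φ (v i)) (fun _ => 1) n]
    simp [hN]
  · -- words at odd positions
    have hbe : ∀ i < n, (b i ↔ ¬ Even i) := by
      intro i hi; rw [hb i hi]; tauto
    have hmap1 : (List.range n).map (fun i => if b i then ι (v i) else t ^ r i)
        = (List.range n).map (fun i => if Even i then t ^ r i else ι (v i)) := by
      apply List.map_congr_left
      intro i hi
      rw [List.mem_range] at hi
      by_cases he : Even i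
      · rw [if_neg (by rw [hbe i hi]; tauto), if_pos he]
      · rw [if_pos (by rw [hbe i hi]; tauto), if_neg he]
    have hmap2 : (List.range n).map (fun i => if b i then φ (v i) else 1)
        = (List.range n).map (fun i => if Even i then 1 else φ (v i)) := by
      apply List.map_congr_left
      intro i hi
      rw [List.mem_range] at hi
      by_cases he : Even i
      · rw [if_neg (by rw [hbe i hi]; tauto), if_pos he]
      · rw [if_pos (by rw [hbe i hi]; tauto), if_neg he]
    rw [hmap1, hmap2]
    set N := n/2 with hN
    set E : ℕ → ℕ := fun q => if 2*q < n then r (2*q) else 0 with hE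
    have harg : ((List.range n).map (fun i => if Even i then t ^ r i else ι (v i))).prod
        = ((List.range N).map (fun q => t ^ E q * ι (v (2*q+1)))).prod * t ^ E N := by
      rw [reshape_odd (fun i => ι (v i)) (fun i => t ^ r i) n]
      congr 1
      · apply congrArg
        apply List.map_congr_left
        intro q hq
        rw [List.mem_range] at hq
        simp only [hE]
        rw [if_pos (by omega : 2*q < n)]
      · simp only [hE, hN]
        by_cases h1 : n % 2 = 1
        · rw [if_pos (by omega : 2*(n/2) < n), if_pos h1, show 2*(n/2) = n-1 by omega]
        · rw [if_neg (by omega : ¬ 2*(n/2) < n), if_neg h1, pow_zero]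
    rw [harg, hext.2 N (fun q => v (2*q+1)) E
        (fun q hq => hv (2*q+1) (by omega) (by rw [hbe (2*q+1) (by omega)]; simp [Nat.even_add_one, Nat.even_iff]))
        (fun q hq1 hq2 => by
          simp only [hE]
          rw [if_pos (by omega : 2*q < n)]
          exact hr (2*q) (by omega))]
    rw [reshape_odd (fun i => φ (v i)) (fun _ => 1) n]
    simp [hN]

/- `A i` is the unital free *-algebra `𝒜ᵢ₊₁` with generating set `G i`; `B i` is
`𝒜̃ᵢ₊₁ = 𝒜ᵢ₊₁ * ℂ[t]` with canonical embedding `ι i` and hermitian separator `t i`;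
`T = 𝒜̃^{(1)} = 𝒜̃₁ ⊗ 𝒜̃₂` with the canonical commuting embeddings `e 0`, `e 1`;
`Φ = Φ̃^{(1)} = φ̃₁ ⊗ φ̃₂`, where `φt i` is the Boolean extension of the state `φ i`;
`j i` is `jᵢ₊₁^{(1)}`, i.e. `j₁^{(1)}(a) = a ⊗ t` and `j₂^{(1)}(b) = t ⊗ b` on generators.
Conclusion: `Φ̃^{(1)} ∘ j^{(1)}` is the Boolean product `φ₁ *_B φ₂`. -/
theorem one_freeness_is_boolean_product
    {A B : Fin 2 → Type*} {T : Type*}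
    [∀ i, Ring (A i)] [∀ i, Algebra ℂ (A i)] [∀ i, StarRing (A i)] [∀ i, StarModule ℂ (A i)]
    [∀ i, Ring (B i)] [∀ i, Algebra ℂ (B i)] [∀ i, StarRing (B i)] [∀ i, StarModule ℂ (B i)]
    [Ring T] [Algebra ℂ T] [StarRing T] [StarModule ℂ T]
    (G : ∀ i, Set (A i)) (hG : ∀ i, ∀ x ∈ G i, star x ∈ G i)
    (hA : ∀ i, Algebra.adjoin ℂ (G i) = ⊤)
    (ι : ∀ i, A i →⋆ₐ[ℂ] B i) (t : ∀ i, B i) (ht : ∀ i, star (t i) = t i)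
    (hB : ∀ i, Algebra.adjoin ℂ (Set.range (ι i) ∪ {t i}) = ⊤)
    (e : ∀ i, B i →⋆ₐ[ℂ] T)
    (hcomm : ∀ (x : B 0) (y : B 1), Commute (e 0 x) (e 1 y))
    (hT : Algebra.adjoin ℂ ({x : T | ∃ b, x = e 0 b} ∪ {x : T | ∃ b, x = e 1 b}) = ⊤)
    -- the states `φ₁`, `φ₂` and their Boolean extensions `φ̃₁`, `φ̃₂`
    (φ : ∀ i, A i →ₗ[ℂ] ℂ) (hφ : ∀ i, IsState (φ i))
    (φt : ∀ i, B i →ₗ[ℂ] ℂ) (hφt : ∀ i, IsBooleanExt (G i) (ι i) (t i) (φ i) (φt i))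
    -- the tensor product state `Φ̃^{(1)} = φ̃₁ ⊗ φ̃₂`
    (Φ : T →ₗ[ℂ] ℂ)
    (hΦ : ∀ (x : B 0) (y : B 1), Φ (e 0 x * e 1 y) = φt 0 x * φt 1 y)
    -- the *-homomorphism `j^{(1)}`
    (j : ∀ i, A i →⋆ₐ[ℂ] T)
    (hj1 : ∀ a ∈ G 0, j 0 a = e 0 (ι 0 a) * e 1 (t 1))
    (hj2 : ∀ b ∈ G 1, j 1 b = e 0 (t 0) * e 1 (ι 1 b)) :
    -- `Φ̃^{(1)}(j^{(1)}(1)) = 1` and, for all alternating products of non-empty words,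
    -- `Φ̃^{(1)}(j_{k₁}^{(1)}(w₁) ⋯ j_{kₙ}^{(1)}(wₙ)) = φ_{k₁}(w₁) ⋯ φ_{kₙ}(wₙ)`
    Φ 1 = 1 ∧
    ∀ (n : ℕ) (k : ℕ → Fin 2) (w : ∀ i, A (k i)),
      (∀ i, i + 1 < n → k i ≠ k (i + 1)) →
      (∀ i < n, IsWord (G (k i)) (w i)) →
      Φ (((List.range n).map fun i => j (k i) (w i)).prod) =
        ((List.range n).map fun i => φ (k i) (w i)).prod := by
  have fin2 : ∀ x : Fin 2, x = 0 ∨ x = 1 := by decide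
  have juggle : ∀ (x1 x2 : B 0) (y1 y2 : B 1),
      (e 0 x1 * e 1 y1) * (e 0 x2 * e 1 y2) = e 0 (x1 * x2) * e 1 (y1 * y2) := by
    intro x1 x2 y1 y2
    rw [map_mul, map_mul, mul_assoc, ← mul_assoc (e 1 y1), (hcomm x2 y1).symm.eq,
      mul_assoc (e 0 x2), ← mul_assoc (e 0 x1)]
  constructor
  · have h1 := hΦ 1 1
    rw [map_one, map_one, one_mul, (hφt 0).1, (hφt 1).1, mul_one] at h1
    exact h1
  intro n k w halt hw
  -- transport lemmas
  have trj : ∀ (a b : Fin 2) (h : a = b) (x : A a),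
      j b (cast (congrArg A h) x) = j a x := by rintro a b rfl x; rfl
  have trφ : ∀ (a b : Fin 2) (h : a = b) (x : A a),
      φ b (cast (congrArg A h) x) = φ a x := by rintro a b rfl x; rfl
  have trG : ∀ (a b : Fin 2) (h : a = b), ∀ x ∈ G a, cast (congrArg A h) x ∈ G b := by
    rintro a b rfl x hx; exact hx
  have trL : ∀ (a b : Fin 2) (h : a = b) (L : List (A a)),
      (L.map fun x => cast (congrArg A h) x).prod = cast (congrArg A h) L.prod := by
    rintro a b rfl L
    show (L.map fun x => x).prod = L.prod
    simp
  -- word block lemmas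
  have jword0 : ∀ L : List (A 0), (∀ a ∈ L, a ∈ G 0) →
      j 0 L.prod = e 0 (ι 0 L.prod) * e 1 (t 1 ^ L.length) := by
    intro L
    induction L with
    | nil => intro _; simp
    | cons a L ih =>
      intro hmem
      simp only [List.prod_cons, List.length_cons]
      rw [map_mul, ih (fun x hx => hmem x (List.mem_cons_of_mem a hx)),
        hj1 a (hmem a List.mem_cons_self), juggle, map_mul (ι 0), pow_succ']
  have jword1 : ∀ L : List (A 1), (∀ a ∈ L, a ∈ G 1) →
      j 1 L.prod = e 0 (t 0 ^ L.length) * e 1 (ι 1 L.prod) := by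
    intro L
    induction L with
    | nil => intro _; simp
    | cons a L ih =>
      intro hmem
      simp only [List.prod_cons, List.length_cons]
      rw [map_mul, ih (fun x hx => hmem x (List.mem_cons_of_mem a hx)),
        hj2 a (hmem a List.mem_cons_self), juggle, map_mul (ι 1), pow_succ']
  -- choose word lists
  choose l hne hmem hprod using hw
  set r : ℕ → ℕ := fun i => if h : i < n then (l i h).length else 1 with hrdef
  set v : ℕ → A 0 := fun i => if h : k i = 0 then cast (congrArg A h) (w i) else 1
    with hvdef
  set u : ℕ → A 1 := fun i => if h : k i = 1 then cast (congrArg A h) (w i) else 1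
    with hudef
  have hrpos : ∀ i < n, 0 < r i := by
    intro i hi
    simp only [hrdef]
    rw [dif_pos hi]
    exact List.length_pos_iff.mpr (hne i hi)
  have key0 : ∀ i, i < n → ∀ h : k i = 0,
      j (k i) (w i) = e 0 (ι 0 (v i)) * e 1 (t 1 ^ r i) ∧ IsWord (G 0) (v i) ∧
        φ (k i) (w i) = φ 0 (v i) := by
    intro i hi h
    have hvi : v i = cast (congrArg A h) (w i) := by
      simp only [hvdef]; rw [dif_pos h]
    have hprod0 : v i = ((l i hi).map fun x => cast (congrArg A h) x).prod := by
      rw [hvi, hprod i hi, trL _ _ h]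
    have hmem0 : ∀ x ∈ (l i hi).map fun x => cast (congrArg A h) x, x ∈ G 0 := by
      intro x hx
      rw [List.mem_map] at hx
      obtain ⟨y, hy, rfl⟩ := hx
      exact trG _ _ h y (hmem i hi y hy)
    have hlen : ((l i hi).map fun x => cast (congrArg A h) x).length = r i := by
      simp only [hrdef, List.length_map]
      rw [dif_pos hi]
    have hne0 : ((l i hi).map fun x => cast (congrArg A h) x) ≠ [] := by
      simp [hne i hi]
    refine ⟨?_, ⟨_, hne0, hmem0, hprod0⟩, (hvi ▸ (trφ _ _ h (w i)).symm : _)⟩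
    rw [show j (k i) (w i) = j 0 (v i) from by rw [hvi, trj _ _ h], hprod0,
      jword0 _ hmem0, hlen, ← hprod0]
  have key1 : ∀ i, i < n → ∀ h : k i = 1,
      j (k i) (w i) = e 0 (t 0 ^ r i) * e 1 (ι 1 (u i)) ∧ IsWord (G 1) (u i) ∧
        φ (k i) (w i) = φ 1 (u i) := by
    intro i hi h
    have hui : u i = cast (congrArg A h) (w i) := by
      simp only [hudef]; rw [dif_pos h]
    have hprod0 : u i = ((l i hi).map fun x => cast (congrArg A h) x).prod := by
      rw [hui, hprod i hi, trL _ _ h]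
    have hmem0 : ∀ x ∈ (l i hi).map fun x => cast (congrArg A h) x, x ∈ G 1 := by
      intro x hx
      rw [List.mem_map] at hx
      obtain ⟨y, hy, rfl⟩ := hx
      exact trG _ _ h y (hmem i hi y hy)
    have hlen : ((l i hi).map fun x => cast (congrArg A h) x).length = r i := by
      simp only [hrdef, List.length_map]
      rw [dif_pos hi]
    have hne0 : ((l i hi).map fun x => cast (congrArg A h) x) ≠ [] := by
      simp [hne i hi]
    refine ⟨?_, ⟨_, hne0, hmem0, hprod0⟩, (hui ▸ (trφ _ _ h (w i)).symm : _)⟩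
    rw [show j (k i) (w i) = j 1 (u i) from by rw [hui, trj _ _ h], hprod0,
      jword1 _ hmem0, hlen, ← hprod0]
  -- factorization of the full product
  have hfactor : ∀ i, i < n → j (k i) (w i)
      = e 0 (if k i = 0 then ι 0 (v i) else t 0 ^ r i)
        * e 1 (if k i = 1 then ι 1 (u i) else t 1 ^ r i) := by
    intro i hi
    rcases fin2 (k i) with h | h
    · rw [if_pos h, if_neg (show ¬ k i = 1 by rw [h]; decide)]
      exact (key0 i hi h).1
    · rw [if_neg (show ¬ k i = 0 by rw [h]; decide), if_pos h]
      exact (key1 i hi h).1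
  have prodfact : ∀ m, m ≤ n →
      ((List.range m).map fun i => j (k i) (w i)).prod
        = e 0 (((List.range m).map fun i =>
              if k i = 0 then ι 0 (v i) else t 0 ^ r i).prod)
          * e 1 (((List.range m).map fun i =>
              if k i = 1 then ι 1 (u i) else t 1 ^ r i).prod) := by
    intro m
    induction m with
    | zero => intro _; simp
    | succ m ih =>
      intro h
      rw [prodRangeSucc, prodRangeSucc, prodRangeSucc, ih (by omega),
        hfactor m (by omega), juggle]
  rw [prodfact n le_rfl, hΦ]
  have fina : ∀ x y : Fin 2, x ≠ y → ((y = 0) ↔ ¬ (x = 0)) := by decide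
  have finb : ∀ x y : Fin 2, x ≠ y → ((y = 1) ↔ ¬ (x = 1)) := by decide
  rw [eval_words (G 0) (ι 0) (t 0) (φ 0) (φt 0) (hφt 0) n (fun i => k i = 0)
      (fun i hi => fina _ _ (halt i hi)) v r
      (fun i hi h => (key0 i hi h).2.1) hrpos,
    eval_words (G 1) (ι 1) (t 1) (φ 1) (φt 1) (hφt 1) n (fun i => k i = 1)
      (fun i hi => finb _ _ (halt i hi)) u r
      (fun i hi h => (key1 i hi h).2.1) hrpos,
    ← List.prod_map_mul]
  apply congrArg List.prod
  apply List.map_congr_left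
  intro i hi
  rw [List.mem_range] at hi
  rcases fin2 (k i) with h | h
  · rw [if_pos h, if_neg (show ¬ k i = 1 by rw [h]; decide), mul_one,
      ← (key0 i hi h).2.2]
  · rw [if_neg (show ¬ k i = 0 by rw [h]; decide), if_pos h, one_mul,
      ← (key1 i hi h).2.2]
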